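/- Let X be a complete metric space, U a closed process on X, and D a universe in X. Suppose there is a family D̂₀ = {D₀(t) : t ∈ ℝ} of nonempty subsets of X which is pullback D-absorbing for U, and U is pullback D̂₀-asymptotically compact. The family A_D(t) = cl(⋃_{D̂∈D} Λ(D̂,t)) is minimal among pullback D-attracting families of closed sets: if Ĉ = {C(t) : t ∈ ℝ} is any family of closed subsets of X such that lim_{τ→−∞} dist(U(t,τ)D(τ), C(t)) = 0 for every D̂ ∈ D and every t ∈ ℝ, then A_D(t) ⊆ C(t) for every t ∈ ℝ. -/

import Mathlib

open Filter Topology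

/-- The pullback omega-limit set `Λ(D̂,t) = ⋂_{s ≤ t} cl(⋃_{τ ≤ s} U(t,τ)D(τ))`. -/
def pullbackOmega {X : Type*} [TopologicalSpace X]
    (U : ℝ → ℝ → X → X) (Dh : ℝ → Set X) (t : ℝ) : Set X :=
  ⋂ s ∈ Set.Iic t, closure (⋃ τ ∈ Set.Iic s, U t τ '' Dh τ)

/-- The Hausdorff semidistance `dist(A,B) = sup_{a ∈ A} inf_{b ∈ B} d(a,b)`
(valued in `ENNReal`). -/
noncomputable def semidist {X : Type*} [MetricSpace X] (A B : Set X) : ENNReal :=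
  ⨆ a ∈ A, EMetric.infEdist a B

/-- Minimality of the pullback `𝒟`-attractor: if `Ĉ` is a family of closed sets which
pullback `𝒟`-attracts, then `A_𝒟(t) = cl(⋃_{D̂ ∈ 𝒟} Λ(D̂,t)) ⊆ C(t)` for all `t`. -/
theorem pullback_attractor_minimal
    {X : Type*} [MetricSpace X] [CompleteSpace X]
    (U : ℝ → ℝ → X → X)
    (hid : ∀ τ : ℝ, ∀ x : X, U τ τ x = x)
    (hcomp : ∀ ⦃τ s t : ℝ⦄, τ ≤ s → s ≤ t → ∀ x : X, U t s (U s τ x) = U t τ x)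
    -- U is a closed process
    (hclosed : ∀ ⦃τ t : ℝ⦄, τ ≤ t → ∀ (xn : ℕ → X) (x y : X),
      Tendsto xn atTop (𝓝 x) → Tendsto (fun n => U t τ (xn n)) atTop (𝓝 y) →
      y = U t τ x)
    (𝒟 : Set (ℝ → Set X)) (h𝒟ne : 𝒟.Nonempty)
    (h𝒟 : ∀ Dh ∈ 𝒟, ∀ t : ℝ, (Dh t).Nonempty)
    (D₀ : ℝ → Set X) (hD₀ : ∀ t : ℝ, (D₀ t).Nonempty)
    -- D₀ is pullback 𝒟-absorbing
    (habs : ∀ Dh ∈ 𝒟, ∀ t : ℝ, ∃ τ₀ ≤ t, ∀ τ ≤ τ₀, U t τ '' Dh τ ⊆ D₀ t)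
    -- U is pullback D̂₀-asymptotically compact
    (hac : ∀ t : ℝ, ∀ (τn : ℕ → ℝ) (xn : ℕ → X),
      (∀ n, τn n ≤ t) → Tendsto τn atTop atBot → (∀ n, xn n ∈ D₀ (τn n)) →
      IsCompact (closure (Set.range fun n => U t (τn n) (xn n))))
    -- Ĉ is a family of closed sets which pullback 𝒟-attracts
    (C : ℝ → Set X) (hCclosed : ∀ t : ℝ, IsClosed (C t))
    (hCattr : ∀ Dh ∈ 𝒟, ∀ t : ℝ,
      Tendsto (fun τ => semidist (U t τ '' Dh τ) (C t)) atBot (𝓝 0)) :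
    ∀ t : ℝ, closure (⋃ Dh ∈ 𝒟, pullbackOmega U Dh t) ⊆ C t := by
  intro t
  refine (IsClosed.closure_subset_iff (hCclosed t)).mpr ?_
  refine Set.iUnion₂_subset fun Dh hDh x hx => ?_
  have hkey : EMetric.infEdist x (C t) = 0 := by
    refine le_antisymm (ENNReal.le_of_forall_pos_le_add fun ε hε _ => ?_) zero_le
    rw [zero_add]
    have hε2 : (0 : ENNReal) < (ε : ENNReal) / 2 :=
      ENNReal.div_pos (by exact_mod_cast hε.ne') (by norm_num)
    have h1 : ∀ᶠ τ in atBot, semidist (U t τ '' Dh τ) (C t) < (ε : ENNReal) / 2 :=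
      (hCattr Dh hDh t).eventually_lt_const hε2
    obtain ⟨M, hM⟩ := eventually_atBot.mp h1
    have hs : x ∈ closure (⋃ τ ∈ Set.Iic (min M t), U t τ '' Dh τ) := by
      have := Set.mem_iInter₂.mp hx (min M t) (Set.mem_Iic.mpr (min_le_right _ _))
      exact this
    obtain ⟨y, hy, hxy⟩ := EMetric.mem_closure_iff.mp hs _ hε2
    obtain ⟨τ, hτ, hyim⟩ := Set.mem_iUnion₂.mp hy
    have h2 : EMetric.infEdist y (C t) ≤ (ε : ENNReal) / 2 := by
      have hb : EMetric.infEdist y (C t) ≤ semidist (U t τ '' Dh τ) (C t) :=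
        le_iSup₂ (f := fun a (_ : a ∈ U t τ '' Dh τ) => EMetric.infEdist a (C t)) y hyim
      exact hb.trans (hM τ (le_trans hτ (min_le_left _ _))).le
    calc EMetric.infEdist x (C t)
        ≤ EMetric.infEdist y (C t) + edist x y := EMetric.infEdist_le_infEdist_add_edist
      _ ≤ (ε : ENNReal) / 2 + (ε : ENNReal) / 2 := add_le_add h2 hxy.le
      _ = ε := ENNReal.add_halves _
  rw [← (hCclosed t).closure_eq]
  exact EMetric.mem_closure_iff_infEdist_zero.mpr hkey
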